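/- Let C be a Krull–Schmidt abelian category with enough projectives and let R be an additive full subcategory of C. Then R is closed under kernels of epimorphisms (for every short exact sequence 0 → K → M → N → 0 with M, N in R, K is in R) if and only if R satisfies the restricted condition (R'3): for every short exact sequence 0 → K → M → Y → 0 with M in R and Y an indecomposable object of R, one has K in R. -/

import Mathlib

open CategoryTheory Limits

attribute [local instance] CategoryTheory.Abelian.hasFiniteBiproducts

universe v u

variable {C : Type u} [Category.{v} C] [Abelian C]

/-- A class of objects of `C` is an *additive subcategory* if it is closed under
isomorphisms, finite direct sums and direct summands. -/
def IsAdditiveSubcat (P : C → Prop) : Prop :=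
  (∀ ⦃X Y : C⦄, (X ≅ Y) → P X → P Y) ∧
  (∀ ⦃X Y : C⦄, P X → P Y → P (X ⊞ Y)) ∧
  (∀ ⦃X Y : C⦄, P (X ⊞ Y) → P X ∧ P Y)

/-- A class of objects `P` *generates* `C` if every object of `C` admits an epimorphism
from an object of `P`. -/
def GeneratesCat (P : C → Prop) : Prop :=
  ∀ X : C, ∃ (G : C) (f : G ⟶ X), P G ∧ Epi f

/-- `P` is closed under extensions: for every short exact sequence
`0 → A → E → B → 0` with `A, B` in `P`, `E` is in `P`. -/
def ClosedUnderExtensions (P : C → Prop) : Prop :=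
  ∀ S : ShortComplex C, S.ShortExact → P S.X₁ → P S.X₃ → P S.X₂

/-- `P` is closed under kernels of epimorphisms: for every short exact sequence
`0 → K → M → N → 0` with `M, N` in `P`, `K` is in `P`. -/
def ClosedUnderKernelsOfEpis (P : C → Prop) : Prop :=
  ∀ S : ShortComplex C, S.ShortExact → P S.X₂ → P S.X₃ → P S.X₁

/-- A *resolving subcategory* of `C`: an additive class of objects which generates `C`,
is closed under extensions and closed under kernels of epimorphisms. -/
def IsResolving (P : C → Prop) : Prop :=
  IsAdditiveSubcat P ∧ GeneratesCat P ∧ ClosedUnderExtensions P ∧ ClosedUnderKernelsOfEpis P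

/-- The *resolving closure* of a class of objects: the intersection of all resolving
subcategories containing it (i.e. the smallest such subcategory). -/
def ResolvingClosure (X : C → Prop) : C → Prop :=
  fun A => ∀ P : C → Prop, IsResolving P → (∀ B, X B → P B) → P A

/-- The *additive closure* of a class of objects: the intersection of all additive
subcategories containing it. -/
def AdditiveClosure (P : C → Prop) : C → Prop :=
  fun A => ∀ Q : C → Prop, IsAdditiveSubcat Q → (∀ B, P B → Q B) → Q A

/-- `C` is a *Krull–Schmidt* category: every object is isomorphic to a finite direct sum
of indecomposable objects with local endomorphism rings. -/
def IsKrullSchmidtCat (C : Type u) [Category.{v} C] [Abelian C] : Prop :=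
  ∀ X : C, ∃ (n : ℕ) (f : Fin n → C),
    (∀ i, Indecomposable (f i) ∧ IsLocalRing (End (f i))) ∧ Nonempty (X ≅ ⨁ f)

/-- `Y` admits at most `p₀` indecomposable direct summands. -/
def AtMostIndecSummands (p₀ : ℕ) (Y : C) : Prop :=
  ∃ (n : ℕ) (f : Fin n → C), n ≤ p₀ ∧ (∀ i, Indecomposable (f i)) ∧ Nonempty (Y ≅ ⨁ f)

/-- Condition `(Mid)_{p₀}`: for every short exact sequence `0 → X → Y → Z → 0` with `X`, `Z`
indecomposable, the middle object `Y` admits at most `p₀` indecomposable direct summands. -/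
def SatisfiesMid (C : Type u) [Category.{v} C] [Abelian C] (p₀ : ℕ) : Prop :=
  ∀ S : ShortComplex C, S.ShortExact → Indecomposable S.X₁ → Indecomposable S.X₃ →
    AtMostIndecSummands p₀ S.X₂


noncomputable def finBiprodIso {n : ℕ} (f : Fin (n + 1) → C) :
    (⨁ f) ≅ f 0 ⊞ ⨁ (fun i : Fin n => f i.succ) where
  hom := biprod.lift (biproduct.π f 0) (biproduct.lift fun i => biproduct.π f i.succ)
  inv := biprod.desc (biproduct.ι f 0) (biproduct.desc fun i => biproduct.ι f i.succ)
  hom_inv_id := by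
    rw [biprod.lift_desc, biproduct.lift_desc, ← biproduct.total, Fin.sum_univ_succ]
  inv_hom_id := by
    apply biprod.hom_ext'
    · apply biprod.hom_ext
      · simp
      · apply biproduct.hom_ext
        intro k
        simp [biproduct.ι_π_ne _ (Ne.symm (Fin.succ_ne_zero k))]
    · apply biprod.hom_ext
      · apply biproduct.hom_ext'
        intro j
        simp [biproduct.ι_π_ne _ (Fin.succ_ne_zero j)]
      · apply biproduct.hom_ext'
        intro j
        apply biproduct.hom_ext
        intro k
        simp [biproduct.ι_π, Fin.succ_inj]

lemma aux_kernel (R : C → Prop) (hR : IsAdditiveSubcat R)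
    (h : ∀ S : ShortComplex C, S.ShortExact → R S.X₂ → R S.X₃ → Indecomposable S.X₃ → R S.X₁) :
    ∀ (n : ℕ) (f : Fin n → C), (∀ i, Indecomposable (f i)) →
      ∀ S : ShortComplex C, S.ShortExact → R S.X₂ → R S.X₃ → (S.X₃ ≅ ⨁ f) → R S.X₁ := by
  intro n
  induction n with
  | zero =>
    intro f _ S hS h2 h3 e
    have hz : IsZero S.X₃ := by
      refine IsZero.of_iso ?_ e
      rw [IsZero.iff_id_eq_zero]
      apply biproduct.hom_ext
      intro j; exact j.elim0
    have hg : S.g = 0 := hz.eq_of_tgt _ _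
    haveI : Epi S.f := by
      have hex := hS.exact
      rwa [S.exact_iff_epi hg] at hex
    haveI : Mono S.f := hS.mono_f
    haveI : IsIso S.f := isIso_of_mono_of_epi S.f
    exact hR.1 (asIso S.f).symm h2
  | succ n IH =>
    intro f hf S hS h2 h3 e
    set G := ⨁ (fun i : Fin n => f i.succ) with hGdef
    have e' : S.X₃ ≅ f 0 ⊞ G := e ≪≫ finBiprodIso f
    have hRsum : R (f 0 ⊞ G) := hR.1 e' h3
    obtain ⟨hRf0, hRG⟩ := hR.2.2 hRsum
    set g' : S.X₂ ⟶ f 0 ⊞ G := S.g ≫ e'.hom with hg'def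
    haveI : Epi S.g := hS.epi_g
    haveI hepig' : Epi g' := epi_comp _ _
    have hfg' : S.f ≫ g' = 0 := by
      rw [hg'def, ← Category.assoc, S.zero, zero_comp]
    set p₂ : S.X₂ ⟶ G := g' ≫ biprod.snd with hp₂def
    set P := pullback g' (biprod.inl : f 0 ⟶ f 0 ⊞ G) with hPdef
    have w₂ : pullback.fst g' biprod.inl ≫ p₂ = 0 := by
      rw [hp₂def, ← Category.assoc, pullback.condition, Category.assoc,
        biprod.inl_snd, comp_zero]
    haveI : Epi p₂ := by
      haveI : IsSplitEpi (biprod.snd : f 0 ⊞ G ⟶ G) :=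
        ⟨⟨⟨biprod.inr, biprod.inr_snd⟩⟩⟩
      exact epi_comp _ _
    have isLim₂ : IsLimit (KernelFork.ofι (pullback.fst g' biprod.inl) w₂) := by
      apply KernelFork.IsLimit.ofι'
      intro T k hk
      have hcomm : k ≫ g' = (k ≫ g' ≫ biprod.fst) ≫ biprod.inl := by
        apply biprod.hom_ext
        · simp
        · simpa [hp₂def] using hk
      exact ⟨pullback.lift k (k ≫ g' ≫ biprod.fst) hcomm, pullback.lift_fst _ _ _⟩
    let S₂ : ShortComplex C := ShortComplex.mk (pullback.fst g' biprod.inl) p₂ w₂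
    have hS₂ : S₂.ShortExact :=
      { exact := S₂.exact_of_f_is_kernel isLim₂
        mono_f := inferInstance
        epi_g := inferInstance }
    have hRP : R P :=
      IH (fun i => f i.succ) (fun i => hf i.succ) S₂ hS₂ h2 hRG (Iso.refl _)
    -- second sequence
    have hj0 : S.f ≫ g' = (0 : S.X₁ ⟶ f 0) ≫ biprod.inl := by
      rw [hfg', zero_comp]
    set j : S.X₁ ⟶ P := pullback.lift S.f 0 hj0 with hjdef
    have w₃ : j ≫ pullback.snd g' biprod.inl = 0 := by
      rw [hjdef, pullback.lift_snd]
    haveI : Mono j := by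
      have : Mono (j ≫ pullback.fst g' biprod.inl) := by
        rw [hjdef, pullback.lift_fst]; exact hS.mono_f
      exact mono_of_mono j (pullback.fst g' biprod.inl)
    have isLim₃ : IsLimit (KernelFork.ofι j w₃) := by
      refine KernelFork.IsLimit.ofι' _ _ (fun {T} k hk => ?_)
      have hk2 : (k ≫ pullback.fst g' biprod.inl) ≫ S.g = 0 := by
        have h1 : (k ≫ pullback.fst g' biprod.inl) ≫ g' = 0 := by
          rw [Category.assoc, pullback.condition, ← Category.assoc, hk, zero_comp]
        simp only [hg'def] at h1
        exact (cancel_mono e'.hom).1 (by simpa using h1)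
      obtain ⟨l, hl⟩ := KernelFork.IsLimit.lift' hS.fIsKernel _ hk2
      refine ⟨l, ?_⟩
      apply pullback.hom_ext
      · simp only [hjdef, Category.assoc]; rw [pullback.lift_fst]; simpa using hl
      · simp only [hjdef, Category.assoc]; rw [pullback.lift_snd, comp_zero, hk]
    let S₃ : ShortComplex C := ShortComplex.mk j (pullback.snd g' biprod.inl) w₃
    have hS₃ : S₃.ShortExact :=
      { exact := S₃.exact_of_f_is_kernel isLim₃
        mono_f := inferInstance
        epi_g := inferInstance }
    exact h S₃ hS₃ hRP hRf0 (hf 0)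

/-- In a Krull–Schmidt abelian category with enough projectives, an additive
subcategory is closed under kernels of epimorphisms if and only if it satisfies the restricted
condition `(R'3)` where the quotient term is an indecomposable object of the subcategory. -/
theorem closedUnderKernels_iff_restricted
    (C : Type u) [Category.{v} C] [Abelian C] [EnoughProjectives C]
    (hKS : IsKrullSchmidtCat C) (R : C → Prop) (hR : IsAdditiveSubcat R) :
    ClosedUnderKernelsOfEpis R ↔
      (∀ S : ShortComplex C, S.ShortExact → R S.X₂ → R S.X₃ → Indecomposable S.X₃ →
        R S.X₁) := by
  constructor
  · intro hc S hS h2 h3 _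
    exact hc S hS h2 h3
  · intro h S hS h2 h3
    obtain ⟨n, f, hf, ⟨e⟩⟩ := hKS S.X₃
    exact aux_kernel R hR h n f (fun i => (hf i).1) S hS h2 h3 e
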